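/- Let X be a Tychonoff topological space. Then X has a P-directed compact cover (i.e., a family {A_p : p ∈ ℕ^ℕ} of compact subsets of X with union X such that p ≤ q pointwise implies A_p ⊆ A_q) if and only if X is ℕ^ℕ-dominated, i.e., there is a family {A_K : K compact ⊆ ℕ^ℕ} of compact subsets of X with union X such that K ⊆ L implies A_K ⊆ A_L. -/

import Mathlib

open Set

lemma isCompact_le_ptwise (p : ℕ → ℕ) : IsCompact {q : ℕ → ℕ | ∀ n, q n ≤ p n} := by
  have h : {q : ℕ → ℕ | ∀ n, q n ≤ p n} = Set.univ.pi (fun n => Set.Iic (p n)) := by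
    ext q; simp [Set.mem_pi]; rfl
  rw [h]
  exact isCompact_univ_pi (fun n => (Set.finite_Iic _).isCompact)

lemma finite_eval_image {K : Set (ℕ → ℕ)} (hK : IsCompact K) (n : ℕ) :
    ((fun f => f n) '' K).Finite :=
  (hK.image (continuous_apply n)).finite ⟨by infer_instance⟩

/-- A Tychonoff space `X` has a `ℙ`-directed compact cover iff it is `ℕ^ℕ`-dominated. -/
theorem pDirected_cover_iff_baire_dominated (X : Type*) [TopologicalSpace X]
    [CompletelyRegularSpace X] [T2Space X] :
    (∃ A : (ℕ → ℕ) → Set X,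
      (∀ p, IsCompact (A p)) ∧
      (⋃ p, A p) = Set.univ ∧
      (∀ p q : ℕ → ℕ, (∀ n, p n ≤ q n) → A p ⊆ A q)) ↔
    (∃ B : Set (ℕ → ℕ) → Set X,
      (∀ K, IsCompact K → IsCompact (B K)) ∧
      (⋃ K ∈ {K : Set (ℕ → ℕ) | IsCompact K}, B K) = Set.univ ∧
      (∀ K L : Set (ℕ → ℕ), IsCompact K → IsCompact L → K ⊆ L → B K ⊆ B L)) := by
  constructor
  · rintro ⟨A, hAc, hAcov, hAmono⟩
    refine ⟨fun K => A (fun n => sSup ((fun f => f n) '' K)), fun K _ => hAc _, ?_, ?_⟩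
    · apply Set.eq_univ_of_forall
      intro x
      have hx : x ∈ ⋃ p, A p := hAcov ▸ Set.mem_univ x
      obtain ⟨p, hp⟩ := Set.mem_iUnion.mp hx
      refine Set.mem_iUnion₂.mpr ⟨{p}, isCompact_singleton, ?_⟩
      refine hAmono p _ (fun n => ?_) hp
      simp [Set.image_singleton]
    · intro K L hK hL hKL
      apply hAmono
      intro n
      rcases K.eq_empty_or_nonempty with h | h
      · simp [h, csSup_empty]
      · exact csSup_le_csSup (finite_eval_image hL n).bddAbove (h.image _)
          (Set.image_mono hKL)
  · rintro ⟨B, hBc, hBcov, hBmono⟩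
    refine ⟨fun p => B {q | ∀ n, q n ≤ p n},
      fun p => hBc _ (isCompact_le_ptwise p), ?_, ?_⟩
    · apply Set.eq_univ_of_forall
      intro x
      have hx : x ∈ ⋃ K ∈ {K : Set (ℕ → ℕ) | IsCompact K}, B K :=
        hBcov ▸ Set.mem_univ x
      obtain ⟨K, hK, hxK⟩ := Set.mem_iUnion₂.mp hx
      refine Set.mem_iUnion.mpr ⟨fun n => sSup ((fun f => f n) '' K), ?_⟩
      refine hBmono K _ hK (isCompact_le_ptwise _) (fun q hq n => ?_) hxK
      exact le_csSup (finite_eval_image hK n).bddAbove ⟨q, hq, rfl⟩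
    · intro p q hpq
      exact hBmono _ _ (isCompact_le_ptwise p) (isCompact_le_ptwise q)
        (fun r hr n => (hr n).trans (hpq n))
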